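/- In diagonal peg solitaire on the 6×6 board, any solution to the b2-complement (vacate b2, finish at b2) requires at least 13 moves: the board partitions into 12 single-or-multi-hole Merson edge regions plus the interior, each edge region needs a move whose first jump is the first to leave it, and the first move must be made by a peg from the interior (refilling b2), giving 12 + 1 = 13 moves minimum. -/

import Mathlib

abbrev Pos := Finset (ℤ × ℤ)

def mid (a c : ℤ × ℤ) : ℤ × ℤ := ((a.1 + c.1) / 2, (a.2 + c.2) / 2)

def steps : Finset (ℤ × ℤ) := {(2, 0), (-2, 0), (0, 2), (0, -2), (2, 2), (2, -2), (-2, 2), (-2, -2)}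

/-- The jump from `a` to `c` (over `mid a c`) is legal on board `Bd` in position `S`. -/
def LegalJump (Bd S : Pos) (a c : ℤ × ℤ) : Prop :=
  c - a ∈ steps ∧ a ∈ Bd ∧ mid a c ∈ Bd ∧ c ∈ Bd ∧ a ∈ S ∧ mid a c ∈ S ∧ c ∉ S

def doJump (S : Pos) (a c : ℤ × ℤ) : Pos := insert c ((S.erase a).erase (mid a c))

/-- `Plays Bd S js S'`: executing the list of jumps `js` (each legal) from `S` yields `S'`. -/
inductive Plays (Bd : Pos) : Pos → List ((ℤ × ℤ) × (ℤ × ℤ)) → Pos → Prop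
  | nil (S : Pos) : Plays Bd S [] S
  | cons {S S' : Pos} {js : List ((ℤ × ℤ) × (ℤ × ℤ))} {a c : ℤ × ℤ} :
      LegalJump Bd S a c → Plays Bd (doJump S a c) js S' → Plays Bd S ((a, c) :: js) S'

/-- A move: a nonempty chain of jumps by one peg (each jump starts where the previous landed). -/
def IsChainMove (mv : List ((ℤ × ℤ) × (ℤ × ℤ))) : Prop :=
  mv ≠ [] ∧ List.Chain' (fun j1 j2 => j2.1 = j1.2) mv

noncomputable def board6 : Pos := (Finset.Icc (0 : ℤ) 5) ×ˢ (Finset.Icc (0 : ℤ) 5)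

/-! ### Merson regions for the diagonal game -/

def regions : Fin 12 → Pos :=
  ![{(0,0)}, {(0,5)}, {(5,0)}, {(5,5)},
    {(0,1),(0,2)}, {(0,3),(0,4)},
    {(5,1),(5,2)}, {(5,3),(5,4)},
    {(1,0),(2,0)}, {(3,0),(4,0)},
    {(1,5),(2,5)}, {(3,5),(4,5)}]

lemma merson : ∀ i : Fin 12, ∀ a ∈ board6, ∀ s ∈ steps, a + s ∈ board6 →
    mid a (a + s) ∈ regions i → a ∉ regions i → a + s ∈ regions i := by decide

lemma regions_disjoint : ∀ i j : Fin 12, ∀ x ∈ regions i, x ∈ regions j → i = j := by decide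

lemma regions_init : ∀ i : Fin 12, regions i ⊆ board6.erase ((1:ℤ),(1:ℤ)) := by decide

lemma regions_not_final : ∀ i : Fin 12, ¬ regions i ⊆ {((1:ℤ),(1:ℤ))} := by decide

lemma regions_edge : ∀ i : Fin 12, ∀ x ∈ regions i, x.1 = 0 ∨ x.1 = 5 ∨ x.2 = 0 ∨ x.2 = 5 := by
  decide

/-! ### Structural lemmas -/

lemma plays_append {Bd S S'' : Pos} {l₁ l₂ : List ((ℤ × ℤ) × (ℤ × ℤ))}
    (h : Plays Bd S (l₁ ++ l₂) S'') : ∃ T, Plays Bd S l₁ T ∧ Plays Bd T l₂ S'' := by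
  induction l₁ generalizing S with
  | nil => exact ⟨S, Plays.nil S, h⟩
  | cons j t ih =>
    obtain ⟨a, c⟩ := j
    cases h with
    | cons hj hp =>
      obtain ⟨T, h1, h2⟩ := ih hp
      exact ⟨T, Plays.cons hj h1, h2⟩

lemma plays_nil_eq {Bd S S' : Pos} (h : Plays Bd S [] S') : S = S' := by
  cases h; rfl

/-- If a chain of jumps starts outside a Merson region that is full, the region stays full. -/
lemma region_stays (R : Pos)
    (hR : ∀ a ∈ board6, ∀ s ∈ steps, a + s ∈ board6 →
      mid a (a + s) ∈ R → a ∉ R → a + s ∈ R)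
    {S S' : Pos} {js : List ((ℤ × ℤ) × (ℤ × ℤ))}
    (hp : Plays board6 S js S')
    (hch : List.Chain' (fun j1 j2 => j2.1 = j1.2) js)
    (hfull : R ⊆ S) (hhd : ∀ j ∈ js.head?, j.1 ∉ R) : R ⊆ S' := by
  induction js generalizing S with
  | nil => exact (plays_nil_eq hp) ▸ hfull
  | cons j t ih =>
    obtain ⟨a, c⟩ := j
    cases hp with
    | cons hj hp' =>
      have ha : a ∉ R := hhd (a, c) (by simp)
      obtain ⟨hs, haB, hmB, hcB, haS, hmS, hcS⟩ := hj
      have hcR : c ∉ R := fun h => hcS (hfull h)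
      have hac : a + (c - a) = c := by ring
      have hmR : mid a c ∉ R := by
        intro h
        have hM := hR a haB (c - a) hs (by rw [hac]; exact hcB)
          (by rw [hac]; exact h) ha
        rw [hac] at hM
        exact hcR hM
      have hfull' : R ⊆ doJump S a c := by
        intro x hx
        have hxS := hfull hx
        have hxa : x ≠ a := fun h => ha (h ▸ hx)
        have hxm : x ≠ mid a c := fun h => hmR (h ▸ hx)
        exact Finset.mem_insert_of_mem
          (Finset.mem_erase.mpr ⟨hxm, Finset.mem_erase.mpr ⟨hxa, hxS⟩⟩)
      refine ih hp' hch.tail hfull' ?_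
      intro j' hj'
      cases t with
      | nil => simp at hj'
      | cons j2 t2 =>
        simp only [List.head?_cons, Option.mem_some_iff] at hj'
        rw [← hj']
        have hrel : j2.1 = ((a, c) : (ℤ × ℤ) × (ℤ × ℤ)).2 := (List.isChain_cons_cons.mp hch).1
        rw [hrel]
        exact fun h => hcS (hfull h)

/-- Counting lemma: the number of regions full at the start and broken at the end is at
most the number of moves. -/
lemma broken_count (moves : List (List ((ℤ × ℤ) × (ℤ × ℤ)))) :
    ∀ S S' : Pos, (∀ mv ∈ moves, IsChainMove mv) →
    Plays board6 S moves.flatten S' →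
    (Finset.univ.filter (fun i : Fin 12 => regions i ⊆ S ∧ ¬ regions i ⊆ S')).card
      ≤ moves.length := by
  induction moves with
  | nil =>
    intro S S' _ hp
    simp only [List.flatten_nil] at hp
    have hSS := plays_nil_eq hp
    subst hSS
    simp only [List.length_nil, Nat.le_zero, Finset.card_eq_zero,
      Finset.filter_eq_empty_iff]
    exact fun i _ h => h.2 h.1
  | cons mv ms ih =>
    intro S S' hall hp
    simp only [List.flatten_cons] at hp
    obtain ⟨T, h1, h2⟩ := plays_append hp
    have hmv : IsChainMove mv := hall mv List.mem_cons_self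
    obtain ⟨j0, t0, rfl⟩ := List.exists_cons_of_ne_nil hmv.1
    have hsub : (Finset.univ.filter (fun i : Fin 12 => regions i ⊆ S ∧ ¬ regions i ⊆ S'))
        ⊆ (Finset.univ.filter (fun i : Fin 12 => j0.1 ∈ regions i))
          ∪ (Finset.univ.filter (fun i : Fin 12 => regions i ⊆ T ∧ ¬ regions i ⊆ S')) := by
      intro i hi
      simp only [Finset.mem_filter, Finset.mem_union, Finset.mem_univ, true_and] at hi ⊢
      by_cases hT : regions i ⊆ T
      · exact Or.inr ⟨hT, hi.2⟩
      · left
        by_contra hj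
        refine hT (region_stays (regions i) (merson i) h1 hmv.2 hi.1 ?_)
        intro j' hj'
        simp only [List.head?_cons, Option.mem_some_iff] at hj'
        subst hj'
        exact hj
    have hA : (Finset.univ.filter (fun i : Fin 12 => j0.1 ∈ regions i)).card ≤ 1 := by
      refine Finset.card_le_one.mpr ?_
      intro x hx y hy
      simp only [Finset.mem_filter, Finset.mem_univ, true_and] at hx hy
      exact regions_disjoint x y j0.1 hx hy
    calc (Finset.univ.filter (fun i : Fin 12 => regions i ⊆ S ∧ ¬ regions i ⊆ S')).card
        ≤ ((Finset.univ.filter (fun i : Fin 12 => j0.1 ∈ regions i))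
          ∪ (Finset.univ.filter (fun i : Fin 12 => regions i ⊆ T ∧ ¬ regions i ⊆ S'))).card :=
          Finset.card_le_card hsub
      _ ≤ (Finset.univ.filter (fun i : Fin 12 => j0.1 ∈ regions i)).card
          + (Finset.univ.filter (fun i : Fin 12 => regions i ⊆ T ∧ ¬ regions i ⊆ S')).card :=
          Finset.card_union_le _ _
      _ ≤ 1 + ms.length := Nat.add_le_add hA (ih T S' (fun m hm => hall m (List.mem_cons_of_mem _ hm)) h2)
      _ ≤ ((j0 :: t0) :: ms).length := by
          simp only [List.length_cons]
          omega

/-- In diagonal peg solitaire on the 6×6 board, any solution to the b2-complement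
(vacate b2 = (1,1), finish with a single peg at b2) uses at least 13 moves. -/
theorem diag_b2_complement_thirteen_moves (ℤ' : Unit)
    (moves : List (List ((ℤ × ℤ) × (ℤ × ℤ))))
    (hch : ∀ mv ∈ moves, IsChainMove mv)
    (hp : Plays board6 (board6.erase ((1 : ℤ), (1 : ℤ))) moves.flatten {((1 : ℤ), (1 : ℤ))}) :
    13 ≤ moves.length := by
  cases moves with
  | nil =>
    exfalso
    simp only [List.flatten_nil] at hp
    have h := plays_nil_eq hp
    have h0 : ((0:ℤ), (0:ℤ)) ∈ board6.erase ((1:ℤ), (1:ℤ)) := by decide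
    rw [h] at h0
    exact absurd h0 (by decide)
  | cons mv0 rest =>
    simp only [List.flatten_cons] at hp
    obtain ⟨T, h1, h2⟩ := plays_append hp
    have hmv0 : IsChainMove mv0 := hch mv0 List.mem_cons_self
    obtain ⟨j0, t0, rfl⟩ := List.exists_cons_of_ne_nil hmv0.1
    obtain ⟨a, c⟩ := j0
    -- extract the legality of the first jump
    have hj : LegalJump board6 (board6.erase ((1:ℤ), (1:ℤ))) a c := by
      cases h1 with
      | cons hj _ => exact hj
    obtain ⟨hs, haB, hmB, hcB, haS, hmS, hcS⟩ := hj
    have hc : c = ((1:ℤ), (1:ℤ)) := by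
      by_contra hne
      exact hcS (Finset.mem_erase.mpr ⟨hne, hcB⟩)
    have haR : ∀ i : Fin 12, a ∉ regions i := by
      intro i hmem
      have hedge := regions_edge i a hmem
      have hab : 0 ≤ a.1 ∧ a.1 ≤ 5 ∧ 0 ≤ a.2 ∧ a.2 ≤ 5 := by
        simpa [board6, Finset.mem_product, Finset.mem_Icc, and_assoc] using haB
      rw [hc] at hs
      simp only [steps, Finset.mem_insert, Finset.mem_singleton, Prod.ext_iff,
        Prod.fst_sub, Prod.snd_sub] at hs
      omega
    have hfullT : ∀ i : Fin 12, regions i ⊆ T := by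
      intro i
      refine region_stays (regions i) (merson i) h1 hmv0.2 (regions_init i) ?_
      intro j' hj'
      simp only [List.head?_cons, Option.mem_some_iff] at hj'
      subst hj'
      exact haR i
    have hcount := broken_count rest T {((1:ℤ), (1:ℤ))}
      (fun m hm => hch m (List.mem_cons_of_mem _ hm)) h2
    have hfilter : (Finset.univ.filter
        (fun i : Fin 12 => regions i ⊆ T ∧ ¬ regions i ⊆ {((1:ℤ), (1:ℤ))})) = Finset.univ := by
      refine Finset.filter_true_of_mem ?_
      exact fun i _ => ⟨hfullT i, regions_not_final i⟩
    rw [hfilter] at hcount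
    simp only [Finset.card_univ, Fintype.card_fin] at hcount
    simp only [List.length_cons]
    omega
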